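/- Consider the herding model with tail exponents α (true) and α̃ (misspecified). Conditional on the high state, the probability that all agents take the high action, P_h(a_n = h for all n) = ∏_n (1 − F_h(1 − π̃ⁿ_h)), is strictly positive if and only if α̃ − α < 1. -/

import Mathlib

open Filter

/-- Partial products of a sequence of factors in `(0,1]` converge to the `tprod`. -/
lemma aux_tendsto_partial_prod (a : ℕ → ℝ) (h0 : ∀ n, 0 ≤ a n) (h1 : ∀ n, a n < 1) :
    Tendsto (fun N => ∏ n ∈ Finset.range N, (1 - a n)) atTop
      (nhds (∏' n : ℕ, (1 - a n))) := by
  have hf0 : ∀ n, (0:ℝ) < 1 - a n := fun n => by linarith [h1 n]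
  have hf1 : ∀ n, 1 - a n ≤ 1 := fun n => by linarith [h0 n]
  have hanti : Antitone (fun s : Finset ℕ => ∏ n ∈ s, (1 - a n)) := by
    intro s t hst
    have h := Finset.prod_sdiff hst (f := fun n => 1 - a n)
    have h2 : ∏ n ∈ t \ s, (1 - a n) ≤ 1 :=
      Finset.prod_le_one (fun n _ => le_of_lt (hf0 n)) (fun n _ => hf1 n)
    have h3 : (0:ℝ) ≤ ∏ n ∈ s, (1 - a n) :=
      Finset.prod_nonneg fun n _ => le_of_lt (hf0 n)
    calc ∏ n ∈ t, (1 - a n) = (∏ n ∈ t \ s, (1 - a n)) * ∏ n ∈ s, (1 - a n) := h.symm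
      _ ≤ 1 * ∏ n ∈ s, (1 - a n) := mul_le_mul_of_nonneg_right h2 h3
      _ = ∏ n ∈ s, (1 - a n) := one_mul _
  have hbdd : BddBelow (Set.range fun s : Finset ℕ => ∏ n ∈ s, (1 - a n)) := by
    refine ⟨0, ?_⟩
    rintro x ⟨s, rfl⟩
    exact Finset.prod_nonneg fun n _ => le_of_lt (hf0 n)
  have hmult : Multipliable fun n : ℕ => (1 - a n) :=
    ⟨_, tendsto_atTop_ciInf hanti hbdd⟩
  exact hmult.hasProd.tendsto_prod_nat

/-- For `0 ≤ a n < 1`, the infinite product `∏ (1 - a n)` is positive iff `∑ a n < ∞`. -/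
lemma aux_tprod_pos_iff (a : ℕ → ℝ) (h0 : ∀ n, 0 ≤ a n) (h1 : ∀ n, a n < 1) :
    0 < (∏' n : ℕ, (1 - a n)) ↔ Summable a := by
  have hf0 : ∀ n, (0:ℝ) < 1 - a n := fun n => by linarith [h1 n]
  have htend := aux_tendsto_partial_prod a h0 h1
  constructor
  · intro hpos
    by_contra hns
    have hdiv : Tendsto (fun N => ∑ i ∈ Finset.range N, a i) atTop atTop := by
      have := (summable_iff_not_tendsto_nat_atTop_of_nonneg h0).not_left
      tauto
    -- partial products are squeezed to 0
    have hle : ∀ N, ∏ n ∈ Finset.range N, (1 - a n)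
        ≤ Real.exp (-(∑ i ∈ Finset.range N, a i)) := by
      intro N
      calc ∏ n ∈ Finset.range N, (1 - a n)
          ≤ ∏ n ∈ Finset.range N, Real.exp (-(a n)) := by
            refine Finset.prod_le_prod (fun n _ => le_of_lt (hf0 n)) (fun n _ => ?_)
            have := Real.add_one_le_exp (-(a n))
            linarith
        _ = Real.exp (∑ n ∈ Finset.range N, -(a n)) := (Real.exp_sum _ _).symm
        _ = Real.exp (-(∑ i ∈ Finset.range N, a i)) := by rw [Finset.sum_neg_distrib]
    have hexp0 : Tendsto (fun N => Real.exp (-(∑ i ∈ Finset.range N, a i))) atTop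
        (nhds 0) :=
      Real.tendsto_exp_atBot.comp (tendsto_neg_atBot_iff.2 hdiv)
    have hzero : Tendsto (fun N => ∏ n ∈ Finset.range N, (1 - a n)) atTop (nhds 0) := by
      refine tendsto_of_tendsto_of_tendsto_of_le_of_le tendsto_const_nhds hexp0
        (fun N => Finset.prod_nonneg fun n _ => le_of_lt (hf0 n)) hle
    have : (∏' n : ℕ, (1 - a n)) = 0 := tendsto_nhds_unique htend hzero
    rw [this] at hpos
    exact lt_irrefl _ hpos
  · intro hsum
    -- Summability of logs
    have hsmall : ∀ᶠ n in atTop, a n ≤ 1/2 :=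
      hsum.tendsto_atTop_zero.eventually_le_const (by norm_num : (0:ℝ) < 1/2)
    have hlog : Summable fun n => Real.log (1 - a n) := by
      refine Summable.of_norm_bounded_eventually_nat
        (hsum.mul_left 2) ?_
      filter_upwards [hsmall] with n hn
      have hx0 := h0 n
      have hpos := hf0 n
      have hlog_le : Real.log ((1 - a n)⁻¹) ≤ (1 - a n)⁻¹ - 1 :=
        Real.log_le_sub_one_of_pos (inv_pos.2 hpos)
      rw [Real.log_inv] at hlog_le
      have hinv : (1 - a n)⁻¹ * (1 - a n) = 1 := inv_mul_cancel₀ (ne_of_gt hpos)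
      have hlognp : Real.log (1 - a n) ≤ 0 :=
        Real.log_nonpos (le_of_lt hpos) (by linarith)
      rw [Real.norm_eq_abs, abs_of_nonpos hlognp]
      -- need: -log (1 - a n) ≤ 2 * a n
      have hkey : (1 - a n)⁻¹ - 1 ≤ 2 * a n := by nlinarith [hinv, hpos, hx0, hn]
      linarith
    have hs := hlog.hasSum.rexp
    have heq : (Real.exp ∘ fun n => Real.log (1 - a n)) = fun n => 1 - a n :=
      funext fun n => Real.exp_log (hf0 n)
    rw [heq] at hs
    rw [hs.tprod_eq]
    exact Real.exp_pos _

theorem stmt14 (Fh : ℝ → ℝ) (pt : ℕ → ℝ) (α αt : ℝ)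
    (hα : 0 < α) (hαt : 0 < αt)
    (hFh01 : ∀ q ∈ Set.Icc (0:ℝ) 1, Fh q ∈ Set.Icc (0:ℝ) 1)
    (hFhΘ : ∃ c C q₀ : ℝ, 0 < c ∧ c ≤ C ∧ 0 < q₀ ∧
      ∀ q ∈ Set.Ioo (0:ℝ) q₀, c * q ^ (α + 1) ≤ Fh q ∧ Fh q ≤ C * q ^ (α + 1))
    (hpt : ∀ n, pt n ∈ Set.Ioo (0:ℝ) 1)
    (hptΘ : ∃ c C : ℝ, 0 < c ∧ c ≤ C ∧ ∀ n : ℕ, 1 ≤ n →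
      c * (n : ℝ) ^ (-(1 / αt)) ≤ 1 - pt n ∧ 1 - pt n ≤ C * (n : ℝ) ^ (-(1 / αt)))
    (hlt1 : ∀ n, Fh (1 - pt n) < 1) :
    0 < (∏' n : ℕ, (1 - Fh (1 - pt n))) ↔ αt - α < 1 := by
  obtain ⟨c, C, q₀, hc, hcC, hq₀, hFh⟩ := hFhΘ
  obtain ⟨cp, Cp, hcp, hcpCp, hp⟩ := hptΘ
  have hCpos : 0 < C := lt_of_lt_of_le hc hcC
  have hCppos : 0 < Cp := lt_of_lt_of_le hcp hcpCp
  set a : ℕ → ℝ := fun n => Fh (1 - pt n) with ha_def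
  have hq_mem : ∀ n, (1 - pt n) ∈ Set.Icc (0:ℝ) 1 := by
    intro n
    obtain ⟨h1, h2⟩ := hpt n
    constructor <;> linarith
  have h0 : ∀ n, 0 ≤ a n := fun n => (hFh01 _ (hq_mem n)).1
  have h1 : ∀ n, a n < 1 := hlt1
  rw [aux_tprod_pos_iff a h0 h1]
  set p : ℝ := (-(1 / αt)) * (α + 1) with hp_def
  have hαt1 : (0:ℝ) < α + 1 := by linarith
  have hiff : p < -1 ↔ αt - α < 1 := by
    have hpe : p = -((α + 1) / αt) := by rw [hp_def]; ring
    rw [hpe, neg_lt_neg_iff, one_lt_div hαt]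
    constructor <;> intro <;> linarith
  -- eventually 1 - pt n < q₀ and n ≥ 1
  have htend0 : Tendsto (fun n : ℕ => Cp * (n : ℝ) ^ (-(1 / αt))) atTop (nhds 0) := by
    have h := (tendsto_rpow_neg_atTop (by positivity : (0:ℝ) < 1 / αt)).comp
      (tendsto_natCast_atTop_atTop (R := ℝ))
    simpa using h.const_mul Cp
  have hev : ∀ᶠ n : ℕ in atTop, Cp * (n : ℝ) ^ (-(1 / αt)) < q₀ :=
    htend0.eventually_lt_const hq₀
  obtain ⟨n₀, hn₀⟩ := (hev.and (eventually_ge_atTop 1)).exists_forall_of_atTop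
  -- pointwise two-sided bounds for n ≥ n₀
  have hbound : ∀ n : ℕ, n₀ ≤ n →
      (c * cp ^ (α + 1)) * (n:ℝ) ^ p ≤ a n ∧ a n ≤ (C * Cp ^ (α + 1)) * (n:ℝ) ^ p := by
    intro n hn
    obtain ⟨hlt, hge1⟩ := hn₀ n hn
    have hnR : (1:ℝ) ≤ (n:ℝ) := by exact_mod_cast hge1
    have hnR0 : (0:ℝ) ≤ (n:ℝ) := by linarith
    have hrpow_pos : (0:ℝ) < (n:ℝ) ^ (-(1 / αt)) :=
      Real.rpow_pos_of_pos (by linarith) _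
    obtain ⟨hlow, hhigh⟩ := hp n hge1
    have hqpos : 0 < 1 - pt n := by linarith [(hpt n).2]
    have hqlt : 1 - pt n < q₀ := lt_of_le_of_lt hhigh hlt
    obtain ⟨hF_low, hF_high⟩ := hFh (1 - pt n) ⟨hqpos, hqlt⟩
    have hmul : ∀ k : ℝ, 0 ≤ k →
        (k * (n:ℝ) ^ (-(1 / αt))) ^ (α + 1) = k ^ (α + 1) * (n:ℝ) ^ p := by
      intro k hk
      rw [Real.mul_rpow hk (le_of_lt hrpow_pos), hp_def, Real.rpow_mul hnR0]
    constructor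
    · calc (c * cp ^ (α + 1)) * (n:ℝ) ^ p
          = c * ((cp * (n:ℝ) ^ (-(1 / αt))) ^ (α + 1)) := by
            rw [hmul cp (le_of_lt hcp)]; ring
        _ ≤ c * (1 - pt n) ^ (α + 1) := by
            refine mul_le_mul_of_nonneg_left ?_ (le_of_lt hc)
            exact Real.rpow_le_rpow (by positivity) hlow (le_of_lt hαt1)
        _ ≤ a n := hF_low
    · calc a n ≤ C * (1 - pt n) ^ (α + 1) := hF_high
        _ ≤ C * ((Cp * (n:ℝ) ^ (-(1 / αt))) ^ (α + 1)) := by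
            refine mul_le_mul_of_nonneg_left ?_ (le_of_lt hCpos)
            exact Real.rpow_le_rpow (le_of_lt hqpos) hhigh (le_of_lt hαt1)
        _ = (C * Cp ^ (α + 1)) * (n:ℝ) ^ p := by
            rw [hmul Cp (le_of_lt hCppos)]; ring
  rw [← hiff]
  have hK₁ : 0 < c * cp ^ (α + 1) := by positivity
  have hK₂ : 0 < C * Cp ^ (α + 1) := by positivity
  constructor
  · -- Summable a → p < -1
    intro hsum
    have hshift : Summable fun n => a (n + n₀) := (summable_nat_add_iff n₀).2 hsum
    have hsum2 : Summable fun n : ℕ =>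
        (c * cp ^ (α + 1)) * ((n + n₀ : ℕ) : ℝ) ^ p := by
      refine Summable.of_nonneg_of_le (fun n => ?_) (fun n => ?_) hshift
      · positivity
      · exact (hbound (n + n₀) (Nat.le_add_left _ _)).1
    have hsum3 : Summable fun n : ℕ => ((n + n₀ : ℕ) : ℝ) ^ p :=
      (summable_mul_left_iff (ne_of_gt hK₁)).1 hsum2
    have hsum4 : Summable fun n : ℕ => (n : ℝ) ^ p :=
      (summable_nat_add_iff (f := fun n : ℕ => (n:ℝ) ^ p) n₀).1 hsum3
    exact Real.summable_nat_rpow.1 hsum4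
  · -- p < -1 → Summable a
    intro hplt
    have hsum0 : Summable fun n : ℕ => (C * Cp ^ (α + 1)) * (n : ℝ) ^ p :=
      (Real.summable_nat_rpow.2 hplt).mul_left _
    refine Summable.of_norm_bounded_eventually_nat hsum0 ?_
    filter_upwards [eventually_ge_atTop n₀] with n hn
    rw [Real.norm_eq_abs, abs_of_nonneg (h0 n)]
    exact (hbound n hn).2
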